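/- Let (Ω, F, P) be a probability space and let F, F_h, G, G_h : ℝ^d × Ω → ℝ^d (indexed by h > 0) be measurable maps. Fix z ∈ ℝ^d. Suppose (i) F_h(z', ·) → F(z', ·) in probability as h → 0 for each fixed z', and G_h(z, ·) → G(z, ·) in probability; (ii) for every M > 0, sup_{|z'| ≤ M} |F_h(z', ω) − F(z', ω)| → 0 in probability as h → 0; and (iii) for every M > 0 there is an almost-surely finite random variable C with sup_{|z'| ≤ 2M} of the Lipschitz constant of F(·, ω) on that ball bounded by C. Then F_h(G_h(z, ·), ·) → F(G(z, ·), ·) in probability as h → 0. -/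

import Mathlib

open MeasureTheory Filter Topology

/-- Composition/continuous-mapping theorem for random functions converging in probability
(Theorem 3.2.3 of "Scalable Gradients for Stochastic Differential Equations"). -/
theorem composition_tendstoInMeasure
    {Ω : Type*} [MeasurableSpace Ω] (P : Measure Ω) [IsProbabilityMeasure P]
    {d : ℕ}
    (F G : EuclideanSpace ℝ (Fin d) → Ω → EuclideanSpace ℝ (Fin d))
    (Fh Gh : ℝ → EuclideanSpace ℝ (Fin d) → Ω → EuclideanSpace ℝ (Fin d))
    (hFmeas : Measurable fun p : EuclideanSpace ℝ (Fin d) × Ω => F p.1 p.2)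
    (hGmeas : Measurable fun p : EuclideanSpace ℝ (Fin d) × Ω => G p.1 p.2)
    (hFhmeas : ∀ h, Measurable fun p : EuclideanSpace ℝ (Fin d) × Ω => Fh h p.1 p.2)
    (hGhmeas : ∀ h, Measurable fun p : EuclideanSpace ℝ (Fin d) × Ω => Gh h p.1 p.2)
    (z : EuclideanSpace ℝ (Fin d))
    -- (i) pointwise convergence in probability of F_h and convergence of G_h at z
    (hFconv : ∀ z', TendstoInMeasure P (fun h => Fh h z') (𝓝[>] (0 : ℝ)) (F z'))
    (hGconv : TendstoInMeasure P (fun h => Gh h z) (𝓝[>] (0 : ℝ)) (G z))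
    -- (ii) local uniform convergence in probability of F_h to F
    (hunif : ∀ M : ℝ, 0 < M → ∀ ε : ℝ, 0 < ε →
      Tendsto (fun h => P {ω | ∃ z' : EuclideanSpace ℝ (Fin d),
          ‖z'‖ ≤ M ∧ ε ≤ dist (Fh h z' ω) (F z' ω)})
        (𝓝[>] (0 : ℝ)) (𝓝 0))
    -- (iii) a.s. finite random local Lipschitz bound for F on balls of radius 2M
    (hlip : ∀ M : ℝ, 0 < M → ∃ C : Ω → ℝ,
      ∀ᵐ ω ∂P, ∀ z₁ z₂ : EuclideanSpace ℝ (Fin d), ‖z₁‖ ≤ 2 * M → ‖z₂‖ ≤ 2 * M →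
        dist (F z₁ ω) (F z₂ ω) ≤ C ω * dist z₁ z₂) :
    TendstoInMeasure P (fun h ω => Fh h (Gh h z ω) ω) (𝓝[>] (0 : ℝ))
      (fun ω => F (G z ω) ω) := by
  classical
  rw [tendstoInMeasure_iff_dist]
  intro ε hε
  rw [ENNReal.tendsto_nhds_zero]
  intro δ hδ
  set δ4 : ENNReal := δ / 4 with hδ4def
  have hδ4 : 0 < δ4 := ENNReal.div_pos hδ.ne' (by norm_num)
  -- measurability of the relevant random variables
  have hGz : Measurable (fun ω => G z ω) := hGmeas.comp measurable_prodMk_left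
  have hFy : ∀ y, Measurable (fun ω => F y ω) :=
    fun y => hFmeas.comp measurable_prodMk_left
  -- Step 1 : choose M with P (‖G z‖ > M) small
  have hB1 : Tendsto (fun n : ℕ => P {ω | (n : ℝ) < ‖G z ω‖}) atTop (𝓝 0) := by
    have h0 : (⋂ n : ℕ, {ω | (n : ℝ) < ‖G z ω‖}) = ∅ := by
      ext ω
      simp only [Set.mem_iInter, Set.mem_setOf_eq, Set.mem_empty_iff_false, iff_false,
        not_forall, not_lt]
      exact exists_nat_ge ‖G z ω‖
    have h1 := tendsto_measure_iInter_atTop (μ := P)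
      (s := fun n : ℕ => {ω | (n : ℝ) < ‖G z ω‖})
      (fun n => (measurableSet_lt measurable_const hGz.norm).nullMeasurableSet)
      (by
        intro n m hnm ω hω
        show (n : ℝ) < ‖G z ω‖
        have hcast : (n : ℝ) ≤ (m : ℝ) := by exact_mod_cast hnm
        exact lt_of_le_of_lt hcast hω)
      ⟨0, measure_ne_top P _⟩
    rw [h0] at h1
    simpa [Function.comp_def] using h1
  obtain ⟨n₀, hn₀⟩ := ((ENNReal.tendsto_nhds_zero.1 hB1) δ4 hδ4).exists
  set M : ℝ := (n₀ : ℝ) + 1 with hMdef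
  have hM : 0 < M := by positivity
  -- Step 2 : the a.s. Lipschitz bound on the ball of radius 2*(M+1)
  obtain ⟨C, hC⟩ := hlip (M + 1) (by linarith)
  -- a countable set D ⊆ closedBall 0 (2M+1) which is dense in closedBall 0 (2M)
  obtain ⟨c, hc_count, hc_sub⟩ :=
    TopologicalSpace.IsSeparable.of_separableSpace
      (Metric.closedBall (0 : EuclideanSpace ℝ (Fin d)) (2 * M))
  set D : Set (EuclideanSpace ℝ (Fin d)) :=
    c ∩ Metric.closedBall (0 : EuclideanSpace ℝ (Fin d)) (2 * M + 1) with hDdef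
  have hD_count : D.Countable := hc_count.mono Set.inter_subset_left
  have hD_norm : ∀ y ∈ D, ‖y‖ ≤ 2 * M + 1 := by
    intro y hy
    simpa [mem_closedBall_zero_iff] using hy.2
  have hD_dense : ∀ x : EuclideanSpace ℝ (Fin d), ‖x‖ ≤ 2 * M →
      ∀ η : ℝ, 0 < η → ∃ y ∈ D, dist x y < η := by
    intro x hx η hη
    have hxc : x ∈ closure c := hc_sub (by simpa [mem_closedBall_zero_iff] using hx)
    obtain ⟨y, hyc, hy⟩ := Metric.mem_closure_iff.1 hxc (min η 1) (lt_min hη one_pos)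
    refine ⟨y, ⟨hyc, ?_⟩, lt_of_lt_of_le hy (min_le_left _ _)⟩
    rw [mem_closedBall_zero_iff]
    have h1 : dist x y < 1 := lt_of_lt_of_le hy (min_le_right _ _)
    have h2 : ‖y‖ - ‖x‖ ≤ ‖y - x‖ := norm_sub_norm_le _ _
    have h3 : ‖y - x‖ = dist x y := by rw [dist_comm, dist_eq_norm]
    linarith
  -- Step 3 : choose a Lipschitz-constant level K₀ with small exceptional probability
  set t : ℕ → Set Ω := fun K =>
    {ω | ∃ z₁ ∈ D, ∃ z₂ ∈ D, (K : ℝ) * dist z₁ z₂ < dist (F z₁ ω) (F z₂ ω)} with htdef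
  have ht_meas : ∀ K, MeasurableSet (t K) := by
    intro K
    have : t K = ⋃ z₁ ∈ D, ⋃ z₂ ∈ D,
        {ω | (K : ℝ) * dist z₁ z₂ < dist (F z₁ ω) (F z₂ ω)} := by
      ext ω; simp [htdef]
    rw [this]
    exact MeasurableSet.biUnion hD_count fun z₁ _ =>
      MeasurableSet.biUnion hD_count fun z₂ _ =>
        measurableSet_lt measurable_const ((hFy z₁).dist (hFy z₂))
  have ht_anti : Antitone t := by
    intro K K' hKK' ω hω
    obtain ⟨z₁, hz₁, z₂, hz₂, hlt⟩ := hω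
    exact ⟨z₁, hz₁, z₂, hz₂, lt_of_le_of_lt
      (mul_le_mul_of_nonneg_right (by exact_mod_cast hKK') dist_nonneg) hlt⟩
  have ht_inter : P (⋂ K, t K) = 0 := by
    have hsub : (⋂ K, t K) ⊆ {ω | ¬ ∀ z₁ z₂ : EuclideanSpace ℝ (Fin d),
        ‖z₁‖ ≤ 2 * (M + 1) → ‖z₂‖ ≤ 2 * (M + 1) →
        dist (F z₁ ω) (F z₂ ω) ≤ C ω * dist z₁ z₂} := by
      intro ω hω
      simp only [Set.mem_setOf_eq]
      intro hprop
      obtain ⟨K, hK⟩ := exists_nat_ge (max (C ω) 0)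
      have hωK := Set.mem_iInter.1 hω K
      obtain ⟨z₁, hz₁, z₂, hz₂, hlt⟩ := hωK
      have h1 : dist (F z₁ ω) (F z₂ ω) ≤ C ω * dist z₁ z₂ := by
        refine hprop z₁ z₂ ?_ ?_
        · linarith [hD_norm z₁ hz₁]
        · linarith [hD_norm z₂ hz₂]
      have h2 : C ω * dist z₁ z₂ ≤ (K : ℝ) * dist z₁ z₂ :=
        mul_le_mul_of_nonneg_right (le_trans (le_max_left _ _) hK) dist_nonneg
      exact absurd (le_trans h1 h2) (not_le.2 hlt)
    exact le_antisymm (le_trans (measure_mono hsub) (le_of_eq (ae_iff.1 hC))) zero_le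
  have ht_tendsto : Tendsto (fun K : ℕ => P (t K)) atTop (𝓝 0) := by
    have h1 := tendsto_measure_iInter_atTop (μ := P) (s := t)
      (fun K => (ht_meas K).nullMeasurableSet) ht_anti ⟨0, measure_ne_top P _⟩
    rw [ht_inter] at h1
    exact h1
  obtain ⟨K₀, hK₀⟩ := ((ENNReal.tendsto_nhds_zero.1 ht_tendsto) δ4 hδ4).exists
  -- Step 4 : eventual smallness in h
  set ε' : ℝ := min M (ε / (2 * ((K₀ : ℝ) + 1))) with hε'def
  have hε' : 0 < ε' := lt_min hM (by positivity)
  have hEv1 := (ENNReal.tendsto_nhds_zero.1 (tendstoInMeasure_iff_dist.1 hGconv ε' hε')) δ4 hδ4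
  have hEv2 := (ENNReal.tendsto_nhds_zero.1
    (hunif (2 * M) (by linarith) (ε / 2) (half_pos hε))) δ4 hδ4
  filter_upwards [hEv1, hEv2] with h hh1 hh2
  -- Step 5 : the inclusion of the bad set in five exceptional sets
  set A1 : Set Ω := {ω | (n₀ : ℝ) < ‖G z ω‖}
  set A2 : Set Ω := {ω | ε' ≤ dist (Gh h z ω) (G z ω)}
  set A3 : Set Ω := t K₀
  set A4 : Set Ω := {ω | ¬ ∀ z₁ z₂ : EuclideanSpace ℝ (Fin d),
      ‖z₁‖ ≤ 2 * (M + 1) → ‖z₂‖ ≤ 2 * (M + 1) →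
      dist (F z₁ ω) (F z₂ ω) ≤ C ω * dist z₁ z₂}
  set A5 : Set Ω := {ω | ∃ z' : EuclideanSpace ℝ (Fin d),
      ‖z'‖ ≤ 2 * M ∧ ε / 2 ≤ dist (Fh h z' ω) (F z' ω)}
  have hsub : {ω | ε ≤ dist (Fh h (Gh h z ω) ω) (F (G z ω) ω)} ⊆
      A1 ∪ (A2 ∪ (A3 ∪ (A4 ∪ A5))) := by
    intro ω hω
    by_contra hcon
    simp only [Set.mem_union, not_or] at hcon
    obtain ⟨h1, h2, h3, h4, h5⟩ := hcon
    have h1' : ¬ ((n₀ : ℝ) < ‖G z ω‖) := h1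
    have hGnorm : ‖G z ω‖ ≤ M := by
      have := not_lt.1 h1'
      simp only [hMdef]
      linarith [this]
    have h2' : ¬ (ε' ≤ dist (Gh h z ω) (G z ω)) := h2
    have hdistG : dist (Gh h z ω) (G z ω) < ε' := not_le.1 h2'
    have h4' : ¬ ¬ (∀ z₁ z₂ : EuclideanSpace ℝ (Fin d),
        ‖z₁‖ ≤ 2 * (M + 1) → ‖z₂‖ ≤ 2 * (M + 1) →
        dist (F z₁ ω) (F z₂ ω) ≤ C ω * dist z₁ z₂) := h4
    have hprop : ∀ z₁ z₂ : EuclideanSpace ℝ (Fin d),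
        ‖z₁‖ ≤ 2 * (M + 1) → ‖z₂‖ ≤ 2 * (M + 1) →
        dist (F z₁ ω) (F z₂ ω) ≤ C ω * dist z₁ z₂ := not_not.1 h4'
    have hD_lip : ∀ z₁ ∈ D, ∀ z₂ ∈ D,
        dist (F z₁ ω) (F z₂ ω) ≤ (K₀ : ℝ) * dist z₁ z₂ := by
      intro z₁ hz₁ z₂ hz₂
      by_contra hcon'
      exact h3 ⟨z₁, hz₁, z₂, hz₂, not_le.1 hcon'⟩
    have h5' : ∀ z' : EuclideanSpace ℝ (Fin d), ‖z'‖ ≤ 2 * M →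
        dist (Fh h z' ω) (F z' ω) < ε / 2 := by
      intro z' hz'
      by_contra hcon'
      exact h5 ⟨z', hz', not_lt.1 hcon'⟩
    -- extension of the Lipschitz bound from D to the whole ball of radius 2 M
    have key : ∀ z₁ z₂ : EuclideanSpace ℝ (Fin d), ‖z₁‖ ≤ 2 * M → ‖z₂‖ ≤ 2 * M →
        dist (F z₁ ω) (F z₂ ω) ≤ (K₀ : ℝ) * dist z₁ z₂ := by
      intro z₁ z₂ hz₁ hz₂
      refine le_of_forall_pos_le_add ?_
      intro η hη
      set L : ℝ := max (C ω) 0 with hLdef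
      have hL : 0 ≤ L := le_max_right _ _
      have hK₀0 : (0 : ℝ) ≤ (K₀ : ℝ) := Nat.cast_nonneg _
      have hden : (0 : ℝ) < 2 * L + 2 * (K₀ : ℝ) + 1 := by positivity
      set η' : ℝ := η / (2 * L + 2 * (K₀ : ℝ) + 1) with hη'def
      have hη' : 0 < η' := div_pos hη hden
      obtain ⟨d₁, hd₁D, hd₁⟩ := hD_dense z₁ hz₁ η' hη'
      obtain ⟨d₂, hd₂D, hd₂⟩ := hD_dense z₂ hz₂ η' hη'
      have hLip : ∀ x y : EuclideanSpace ℝ (Fin d), ‖x‖ ≤ 2 * (M + 1) → ‖y‖ ≤ 2 * (M + 1) →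
          dist (F x ω) (F y ω) ≤ L * dist x y := fun x y hx hy =>
        le_trans (hprop x y hx hy)
          (mul_le_mul_of_nonneg_right (le_max_left _ _) dist_nonneg)
      have e1 : dist (F z₁ ω) (F d₁ ω) ≤ L * dist z₁ d₁ :=
        hLip _ _ (by linarith) (by linarith [hD_norm d₁ hd₁D])
      have e2 : dist (F d₂ ω) (F z₂ ω) ≤ L * dist z₂ d₂ := by
        rw [dist_comm (F d₂ ω)]
        exact hLip _ _ (by linarith) (by linarith [hD_norm d₂ hd₂D])
      have e3 : dist (F d₁ ω) (F d₂ ω) ≤ (K₀ : ℝ) * dist d₁ d₂ := hD_lip d₁ hd₁D d₂ hd₂D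
      have e4 : dist d₁ d₂ ≤ dist z₁ z₂ + 2 * η' := by
        have := dist_triangle4 d₁ z₁ z₂ d₂
        have ha : dist d₁ z₁ < η' := by rw [dist_comm]; exact hd₁
        have hb : dist z₂ d₂ < η' := hd₂
        linarith
      have e5 : dist (F z₁ ω) (F z₂ ω) ≤
          dist (F z₁ ω) (F d₁ ω) + dist (F d₁ ω) (F d₂ ω) + dist (F d₂ ω) (F z₂ ω) :=
        dist_triangle4 _ _ _ _
      have heq : (2 * L + 2 * (K₀ : ℝ) + 1) * η' = η := by
        rw [hη'def, mul_div_cancel₀ _ hden.ne']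
      have eb1 : L * dist z₁ d₁ ≤ L * η' := mul_le_mul_of_nonneg_left hd₁.le hL
      have eb2 : L * dist z₂ d₂ ≤ L * η' := mul_le_mul_of_nonneg_left hd₂.le hL
      have eb3 : (K₀ : ℝ) * dist d₁ d₂ ≤ (K₀ : ℝ) * (dist z₁ z₂ + 2 * η') :=
        mul_le_mul_of_nonneg_left e4 hK₀0
      nlinarith [hη'.le]
    -- conclude
    have hGhnorm : ‖Gh h z ω‖ ≤ 2 * M := by
      have h2' : dist (Gh h z ω) (G z ω) < M := lt_of_lt_of_le hdistG (min_le_left _ _)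
      have h3' : ‖Gh h z ω‖ - ‖G z ω‖ ≤ ‖Gh h z ω - G z ω‖ := norm_sub_norm_le _ _
      rw [← dist_eq_norm] at h3'
      linarith
    have hA : dist (Fh h (Gh h z ω) ω) (F (Gh h z ω) ω) < ε / 2 := h5' _ hGhnorm
    have hB : dist (F (Gh h z ω) ω) (F (G z ω) ω) ≤
        (K₀ : ℝ) * dist (Gh h z ω) (G z ω) := key _ _ hGhnorm (by linarith)
    have hB2 : (K₀ : ℝ) * dist (Gh h z ω) (G z ω) ≤ ε / 2 := by
      have hd : dist (Gh h z ω) (G z ω) ≤ ε / (2 * ((K₀ : ℝ) + 1)) :=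
        le_trans hdistG.le (min_le_right _ _)
      have h1' : (K₀ : ℝ) * dist (Gh h z ω) (G z ω) ≤
          (K₀ : ℝ) * (ε / (2 * ((K₀ : ℝ) + 1))) :=
        mul_le_mul_of_nonneg_left hd (Nat.cast_nonneg _)
      have h2' : (K₀ : ℝ) * (ε / (2 * ((K₀ : ℝ) + 1))) ≤ ε / 2 := by
        rw [mul_div_assoc', div_le_div_iff₀ (by positivity) (by norm_num)]
        nlinarith [hε.le, (Nat.cast_nonneg K₀ : (0 : ℝ) ≤ (K₀ : ℝ))]
      linarith
    have htri := dist_triangle (Fh h (Gh h z ω) ω) (F (Gh h z ω) ω) (F (G z ω) ω)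
    have : dist (Fh h (Gh h z ω) ω) (F (G z ω) ω) < ε := by linarith
    exact absurd hω (by simpa using not_le.2 this)
  -- Step 6 : the measure estimate
  have hA4 : P A4 = 0 := ae_iff.1 hC
  calc P {ω | ε ≤ dist (Fh h (Gh h z ω) ω) (F (G z ω) ω)}
      ≤ P (A1 ∪ (A2 ∪ (A3 ∪ (A4 ∪ A5)))) := measure_mono hsub
    _ ≤ P A1 + (P A2 + (P A3 + (P A4 + P A5))) := by
        refine le_trans (measure_union_le _ _) ?_
        gcongr
        refine le_trans (measure_union_le _ _) ?_
        gcongr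
        refine le_trans (measure_union_le _ _) ?_
        gcongr
        exact measure_union_le _ _
    _ ≤ δ4 + (δ4 + (δ4 + (0 + δ4))) :=
        add_le_add hn₀ (add_le_add hh1 (add_le_add hK₀ (add_le_add (le_of_eq hA4) hh2)))
    _ ≤ δ := by
        rw [zero_add, hδ4def]
        rw [show δ / 4 + (δ / 4 + (δ / 4 + δ / 4)) = δ / 4 * 4 by ring]
        rw [ENNReal.div_mul_cancel (by norm_num) (by norm_num)]
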